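/- Let d ≥ 2 be an integer, let u_1,…,u_d be nonzero real numbers, let 2 ≤ x_1 < x_2 < ⋯ < x_d ≤ N be real numbers, let A > 0, and define φ(α) := Σ_{r=1}^d u_r x_r^α for α ∈ J = [A, A+1]. Let ε > 0 and set λ := N^{−ε} |u_d| x_d^{A+1−d} ∏_{m=1}^{d−1} h_m, where h_m = x_{m+1} − x_m. Then there exists a constant C_{d,ε} > 0 depending only on d and ε such that M_d φ(α) ≥ C_{d,ε} λ > 0 for all α ∈ J, where M_d φ(α) := max_{1 ≤ i ≤ d} |φ^{(i)}(α)|. -/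

import Mathlib

open MeasureTheory Filter Finset

open Polynomial


lemma iteratedDeriv_exp_sum {d : ℕ} (u x : Fin d → ℝ) (hx : ∀ r, 0 < x r) (i : ℕ) (α : ℝ) :
    iteratedDeriv i (fun β : ℝ => ∑ r, u r * (x r) ^ β) α
      = ∑ r, u r * (Real.log (x r)) ^ i * (x r) ^ α := by
  induction i generalizing α with
  | zero => simp
  | succ n ih =>
    rw [iteratedDeriv_succ]
    have hfun : iteratedDeriv n (fun β : ℝ => ∑ r, u r * (x r) ^ β)
        = fun β : ℝ => ∑ r, u r * (Real.log (x r)) ^ n * (x r) ^ β := funext fun β => ih β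
    rw [hfun]
    have h : ∀ r : Fin d, HasDerivAt (fun β : ℝ => u r * Real.log (x r) ^ n * (x r) ^ β)
        (u r * Real.log (x r) ^ (n+1) * (x r) ^ α) α := by
      intro r
      have := ((Real.hasStrictDerivAt_const_rpow (hx r) α).hasDerivAt).const_mul
        (u r * Real.log (x r) ^ n)
      convert this using 1
      exacts [rfl, rfl, by ring]
    exact (HasDerivAt.fun_sum (fun r _ => h r)).deriv

lemma l1_mul_X_sub_C (p : ℝ[X]) (a : ℝ) (n : ℕ) :
    ∑ j ∈ range n, |((X - C a) * p).coeff j| ≤ (1 + |a|) * ∑ j ∈ range n, |p.coeff j| := by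
  cases n with
  | zero => simp
  | succ m =>
    have hc0 : ((X - C a) * p).coeff 0 = -(a * p.coeff 0) := by
      simp [mul_coeff_zero]
    have hcs : ∀ j : ℕ, ((X - C a) * p).coeff (j + 1) = p.coeff j - a * p.coeff (j + 1) := by
      intro j
      rw [sub_mul, coeff_sub, ← coeff_X_mul p j]
      simp [coeff_C_mul]
    rw [Finset.sum_range_succ' _ m]
    calc ∑ j ∈ range m, |((X - C a) * p).coeff (j + 1)| + |((X - C a) * p).coeff 0|
        ≤ (∑ j ∈ range m, (|p.coeff j| + |a| * |p.coeff (j+1)|)) + |a| * |p.coeff 0| := by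
          gcongr with j hj
          · rw [hcs j]
            calc |p.coeff j - a * p.coeff (j+1)| ≤ |p.coeff j| + |a * p.coeff (j+1)| :=
              abs_sub _ _
            _ = |p.coeff j| + |a| * |p.coeff (j+1)| := by rw [abs_mul]
          · rw [hc0, abs_neg, abs_mul]
      _ = ∑ j ∈ range m, |p.coeff j|
            + |a| * (∑ j ∈ range m, |p.coeff (j+1)| + |p.coeff 0|) := by
          rw [Finset.sum_add_distrib, ← Finset.mul_sum]; ring
      _ ≤ ∑ j ∈ range (m+1), |p.coeff j| + |a| * ∑ j ∈ range (m+1), |p.coeff j| := by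
          gcongr
          · omega
          · rw [Finset.sum_range_succ' _ m]
      _ = (1 + |a|) * ∑ j ∈ range (m+1), |p.coeff j| := by ring

lemma l1_prod_X_sub_C {ι : Type*} [DecidableEq ι] (s : Finset ι) (a : ι → ℝ) (n : ℕ) :
    ∑ j ∈ range n, |(∏ r ∈ s, (X - C (a r))).coeff j| ≤ ∏ r ∈ s, (1 + |a r|) := by
  induction s using Finset.induction_on with
  | empty =>
    simp only [Finset.prod_empty]
    calc ∑ j ∈ range n, |(1 : ℝ[X]).coeff j| = ∑ j ∈ range n, if j = 0 then 1 else 0 := by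
          refine Finset.sum_congr rfl fun j _ => ?_
          rw [coeff_one]; split <;> simp
      _ ≤ 1 := by rw [Finset.sum_ite_eq' (range n) 0 (fun _ => (1:ℝ))]; split <;> norm_num
  | @insert b t hns ih =>
    rw [Finset.prod_insert hns, Finset.prod_insert hns]
    calc ∑ j ∈ range n, |((X - C (a b)) * ∏ r ∈ t, (X - C (a r))).coeff j|
        ≤ (1 + |a b|) * ∑ j ∈ range n, |(∏ r ∈ t, (X - C (a r))).coeff j| :=
          l1_mul_X_sub_C _ _ _
      _ ≤ (1 + |a b|) * ∏ r ∈ t, (1 + |a r|) := by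
          exact mul_le_mul_of_nonneg_left ih (by positivity)

lemma log_sub_log_ge {a b : ℝ} (ha : 0 < a) (hab : a ≤ b) :
    (b - a) / b ≤ Real.log b - Real.log a := by
  have hb : 0 < b := lt_of_lt_of_le ha hab
  have h := Real.log_le_sub_one_of_pos (x := a / b) (by positivity)
  rw [Real.log_div ha.ne' hb.ne'] at h
  have : a / b = 1 - (b - a)/b := by field_simp; ring
  rw [this] at h
  linarith

lemma one_add_log_le {δ N : ℝ} (hδ : 0 < δ) (hN : 2 ≤ N) :
    1 + Real.log N ≤ (1 + 1/δ) * N ^ δ := by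
  have hN0 : (0:ℝ) < N := by linarith
  have hN1 : 1 ≤ N ^ δ := Real.one_le_rpow (by linarith) hδ.le
  have h := Real.log_le_sub_one_of_pos (x := N ^ δ) (by positivity)
  rw [Real.log_rpow hN0] at h
  have hlog : Real.log N ≤ (N ^ δ - 1) / δ := by
    rw [← sub_nonneg]
    have : (N ^ δ - 1) / δ - Real.log N = (N ^ δ - 1 - δ * Real.log N) / δ := by field_simp; try ring
    rw [this]
    have h3 : 0 ≤ N ^ δ - 1 - δ * Real.log N := by linarith
    positivity
  have : (1 + 1/δ) * N ^ δ = N ^ δ + N ^ δ / δ := by field_simp; try ring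
  rw [this]
  have h2 : (N ^ δ - 1)/δ ≤ N ^ δ / δ := by gcongr; linarith
  linarith

set_option maxHeartbeats 1000000 in
/-- Repulsion principle: `M_d φ(α) ≥ C_{d,ε} λ > 0` throughout `J = [A, A+1]` for
`φ(α) = Σ_r u_r x_r^α`, where `λ = N^{−ε} |u_d| x_d^{A+1−d} ∏ h_m` and
`M_d φ(α) = max_{1 ≤ i ≤ d} |φ^{(i)}(α)|`. -/
theorem repulsion_derivative_lower_bound (d : ℕ) (hd : 2 ≤ d) (ε : ℝ) (hε : 0 < ε) :
    ∃ C > (0 : ℝ), ∀ (N A : ℝ) (u x : Fin d → ℝ), 0 < A →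
      (∀ r, u r ≠ 0) → 2 ≤ x ⟨0, by omega⟩ → StrictMono x → x ⟨d - 1, by omega⟩ ≤ N →
      ∀ α ∈ Set.Icc A (A + 1),
        0 < C * (N ^ (-ε) * |u ⟨d - 1, by omega⟩| * (x ⟨d - 1, by omega⟩) ^ (A + 1 - d) *
            ∏ m : Fin (d - 1),
              (x ⟨m.1 + 1, by have := m.2; omega⟩ - x ⟨m.1, by have := m.2; omega⟩)) ∧
        ∃ i, 1 ≤ i ∧ i ≤ d ∧
          C * (N ^ (-ε) * |u ⟨d - 1, by omega⟩| * (x ⟨d - 1, by omega⟩) ^ (A + 1 - d) *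
              ∏ m : Fin (d - 1),
                (x ⟨m.1 + 1, by have := m.2; omega⟩ - x ⟨m.1, by have := m.2; omega⟩)) ≤
            |iteratedDeriv i (fun β => ∑ r, u r * (x r) ^ β) α| := by
  obtain ⟨e, rfl⟩ : ∃ e, d = e + 2 := ⟨d - 2, by omega⟩
  set δ : ℝ := ε / (e + 1) with hδdef
  have hδ : 0 < δ := by positivity
  have hlog2 : (0:ℝ) < Real.log 2 := Real.log_pos (by norm_num)
  set K : ℝ := (1 + 1/δ) ^ (e + 1) with hKdef
  have hK : 0 < K := by positivity
  refine ⟨Real.log 2 / K, by positivity, ?_⟩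
  intro N A u x hA hu hx0 hmono hxN α hα
  -- basic positivity facts
  have h2le : ∀ r, 2 ≤ x r := fun r =>
    le_trans hx0 (hmono.monotone (by simp [Fin.le_def]))
  have hxpos : ∀ r, 0 < x r := fun r => lt_of_lt_of_le (by norm_num) (h2le r)
  set L : Fin (e + 2) := ⟨e + 2 - 1, by omega⟩ with hLdef
  have hrleL : ∀ r : Fin (e + 2), r ≤ L := fun r => by
    simp only [Fin.le_def, hLdef]; omega
  have hxrN : ∀ r, x r ≤ N := fun r => le_trans (hmono.monotone (hrleL r)) hxN
  have hN2 : (2:ℝ) ≤ N := le_trans (h2le L) (hxrN L)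
  have hN0 : (0:ℝ) < N := by linarith
  set t : Fin (e + 2) → ℝ := fun r => Real.log (x r) with htdef
  have htpos : ∀ r, 0 < t r := fun r =>
    Real.log_pos (lt_of_lt_of_le one_lt_two (h2le r))
  have htlt : ∀ {r r' : Fin (e+2)}, r < r' → t r < t r' := fun h =>
    Real.log_lt_log (hxpos _) (hmono h)
  set s : Finset (Fin (e + 2)) := Finset.univ.erase L with hsdef
  have hscard : s.card = e + 1 := by
    rw [hsdef, Finset.card_erase_of_mem (Finset.mem_univ _)]
    simp
  have hrltL : ∀ r ∈ s, r < L := fun r hr => by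
    have h1 := (Finset.mem_erase.1 hr).1
    exact lt_of_le_of_ne (hrleL r) h1
  set Q : ℝ[X] := ∏ r ∈ s, (X - C (t r)) with hQdef
  set QL : ℝ := ∏ r ∈ s, (t L - t r) with hQLdef
  have hQeval : Q.eval (t L) = QL := by simp [hQdef, hQLdef, eval_prod]
  have hQLpos : 0 < QL := Finset.prod_pos fun r hr => sub_pos.2 (htlt (hrltL r hr))
  set D : ℝ := t L * QL with hDdef
  have hD : 0 < D := mul_pos (htpos L) hQLpos
  set P : ℝ[X] := C D⁻¹ * (X * Q) with hPdef
  have hQdeg : Q.natDegree ≤ e + 1 := by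
    refine le_trans (natDegree_prod_le _ _) ?_
    have h1 : ∀ r ∈ s, (X - C (t r)).natDegree = 1 := fun r _ => natDegree_X_sub_C _
    rw [Finset.sum_congr rfl h1, Finset.sum_const, hscard, smul_eq_mul, mul_one]
  have hPdeg : P.natDegree < e + 3 := by
    refine lt_of_le_of_lt (natDegree_C_mul_le _ _) ?_
    refine lt_of_le_of_lt (natDegree_mul_le) ?_
    have := natDegree_X (R := ℝ)
    omega
  have hPr : ∀ r ∈ s, P.eval (t r) = 0 := by
    intro r hr
    have : Q.eval (t r) = 0 := by
      rw [hQdef, eval_prod]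
      exact Finset.prod_eq_zero hr (by simp)
    simp [hPdef, this]
  have hPL : P.eval (t L) = 1 := by
    simp only [hPdef, eval_mul, eval_C, eval_X, hQeval]
    rw [← hDdef, inv_mul_cancel₀ hD.ne']
  set F : ℕ → ℝ := fun i => ∑ r, u r * t r ^ i * x r ^ α with hFdef
  have hid1 : ∑ r, u r * x r ^ α * P.eval (t r) = u L * x L ^ α := by
    rw [Finset.sum_eq_single_of_mem L (Finset.mem_univ L)]
    · rw [hPL, mul_one]
    · intro r _ hr
      rw [hPr r (Finset.mem_erase.2 ⟨hr, Finset.mem_univ r⟩), mul_zero]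
  have hid2 : ∑ r, u r * x r ^ α * P.eval (t r)
      = ∑ i ∈ range (e + 3), P.coeff i * F i := by
    have hterm : ∀ r : Fin (e + 2), u r * x r ^ α * P.eval (t r)
        = ∑ i ∈ range (e + 3), P.coeff i * (u r * t r ^ i * x r ^ α) := by
      intro r
      rw [eval_eq_sum_range' hPdeg, Finset.mul_sum]
      exact Finset.sum_congr rfl fun i _ => by ring
    rw [Finset.sum_congr rfl fun r _ => hterm r, Finset.sum_comm]
    exact Finset.sum_congr rfl fun i _ => by rw [hFdef, Finset.mul_sum]
  have hc0 : P.coeff 0 = 0 := by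
    simp [hPdef, coeff_C_mul, mul_coeff_zero]
  -- the max of derivatives
  have hne : (Finset.Icc 1 (e + 2)).Nonempty := ⟨1, by simp⟩
  set g : ℕ → ℝ := fun i => |iteratedDeriv i (fun β : ℝ => ∑ r, u r * x r ^ β) α| with hgdef
  obtain ⟨i0, hi0mem, hB⟩ := Finset.exists_mem_eq_sup' hne g
  set B : ℝ := (Finset.Icc 1 (e + 2)).sup' hne g with hBdef
  have hgB : ∀ i ∈ Finset.Icc 1 (e + 2), g i ≤ B := fun i hi => Finset.le_sup' g hi
  have hgF : ∀ i, g i = |F i| := by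
    intro i
    simp only [hgdef, hFdef, htdef]
    rw [iteratedDeriv_exp_sum u x hxpos i α]
  have hBnn : 0 ≤ B := le_trans (abs_nonneg _) (hgB 1 (by simp))
  set S : ℝ := ∑ i ∈ range (e + 3), |P.coeff i| with hSdef
  have h1 : |u L| * x L ^ α ≤ S * B := by
    have habs : |u L| * x L ^ α = |u L * x L ^ α| := by
      rw [abs_mul, abs_of_pos (Real.rpow_pos_of_pos (hxpos L) α)]
    rw [habs, ← hid1, hid2]
    calc |∑ i ∈ range (e + 3), P.coeff i * F i|
        ≤ ∑ i ∈ range (e + 3), |P.coeff i * F i| := Finset.abs_sum_le_sum_abs _ _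
      _ ≤ ∑ i ∈ range (e + 3), |P.coeff i| * B := by
          refine Finset.sum_le_sum fun i hi => ?_
          rw [abs_mul]
          rcases Nat.eq_zero_or_pos i with h0 | h0
          · subst h0; rw [hc0]; simp [hBnn]
          · have hle : |F i| ≤ B := by
              rw [← hgF i]
              exact hgB i (Finset.mem_Icc.2 ⟨h0, by have := Finset.mem_range.1 hi; omega⟩)
            exact mul_le_mul_of_nonneg_left hle (abs_nonneg _)
      _ = S * B := by rw [hSdef, Finset.sum_mul]
  have hXQ0 : (X * Q : ℝ[X]).coeff 0 = 0 := by simp [mul_coeff_zero]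
  have h2 : S ≤ D⁻¹ * (1 + Real.log N) ^ (e + 1) := by
    have hPc : ∀ i, |P.coeff i| = D⁻¹ * |(X * Q : ℝ[X]).coeff i| := by
      intro i
      rw [hPdef, coeff_C_mul, abs_mul, abs_of_pos (inv_pos.2 hD)]
    have hstep : S = D⁻¹ * ∑ j ∈ range (e + 2), |Q.coeff j| := by
      rw [hSdef, Finset.sum_congr rfl fun i _ => hPc i, ← Finset.mul_sum]
      congr 1
      rw [Finset.sum_range_succ' _ (e + 2), hXQ0]
      simp only [abs_zero, add_zero]
      exact Finset.sum_congr rfl fun j _ => by rw [coeff_X_mul]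
    rw [hstep]
    have hl1 := l1_prod_X_sub_C s t (e + 2)
    have hbound : ∏ r ∈ s, (1 + |t r|) ≤ (1 + Real.log N) ^ (e + 1) := by
      have hb1 : ∀ r ∈ s, 1 + |t r| ≤ 1 + Real.log N := by
        intro r _
        rw [abs_of_pos (htpos r)]
        have := Real.log_le_log (hxpos r) (hxrN r)
        simp only [htdef]
        linarith
      calc ∏ r ∈ s, (1 + |t r|) ≤ ∏ r ∈ s, (1 + Real.log N) :=
        Finset.prod_le_prod (fun r _ => by positivity) hb1
      _ = (1 + Real.log N) ^ (e + 1) := by rw [Finset.prod_const, hscard]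
    exact mul_le_mul_of_nonneg_left (le_trans hl1 hbound) (inv_pos.2 hD).le
  have hlogN : (0:ℝ) ≤ 1 + Real.log N := by
    have := Real.log_nonneg (by linarith : 1 ≤ N)
    linarith
  have h3 : (1 + Real.log N) ^ (e + 1) ≤ K * N ^ ε := by
    have h31 : (1 + Real.log N) ^ (e + 1) ≤ ((1 + 1/δ) * N ^ δ) ^ (e + 1) :=
      pow_le_pow_left₀ hlogN (one_add_log_le hδ hN2) _
    have h32 : ((1 + 1/δ) * N ^ δ) ^ (e + 1) = K * N ^ ε := by
      rw [mul_pow, ← hKdef]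
      congr 1
      rw [← Real.rpow_natCast (N ^ δ) (e + 1), ← Real.rpow_mul hN0.le]
      congr 1
      rw [hδdef]
      push_cast
      field_simp
    rw [h32] at h31
    exact h31
  -- reindex products over s by Fin (e+1)
  have himg : s = Finset.image Fin.castSucc Finset.univ := by
    rw [hsdef]
    ext r
    simp only [Finset.mem_erase, Finset.mem_univ, and_true, Finset.mem_image, true_and]
    constructor
    · intro hr
      have hrv : r.1 < e + 1 := by
        have h2 := r.2
        by_contra hcon
        push_neg at hcon
        exact hr (Fin.ext (by simp only [hLdef]; omega))
      exact ⟨⟨r.1, hrv⟩, Fin.ext rfl⟩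
    · rintro ⟨m, rfl⟩
      have hm := m.2
      intro hEq
      have := congrArg Fin.val hEq
      simp only [hLdef, Fin.coe_castSucc] at this
      omega
  have hreindex : ∀ f : Fin (e + 2) → ℝ, ∏ r ∈ s, f r = ∏ m : Fin (e + 1), f m.castSucc := by
    intro f
    rw [himg, Finset.prod_image fun a _ b _ h => Fin.castSucc_injective _ h]
  set PP : ℝ := ∏ m : Fin (e + 1), (x m.succ - x m.castSucc) with hPPdef
  have hPPpos : 0 < PP :=
    Finset.prod_pos fun m _ => sub_pos.2 (hmono (Fin.castSucc_lt_succ (i := m)))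
  have hQLge : PP / x L ^ (e + 1) ≤ QL := by
    rw [hQLdef, hreindex]
    have hfac : ∀ m : Fin (e + 1),
        (x m.succ - x m.castSucc) / x L ≤ t L - t m.castSucc := by
      intro m
      have h1 : x m.castSucc < x m.succ := hmono (Fin.castSucc_lt_succ (i := m))
      have h2 : x m.succ ≤ x L := hmono.monotone (hrleL _)
      have h3 := log_sub_log_ge (hxpos m.castSucc) (le_trans h1.le h2)
      simp only [htdef]
      have h4 : (x m.succ - x m.castSucc) / x L ≤ (x L - x m.castSucc) / x L := by
        gcongr <;> linarith [hxpos L]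
      exact le_trans h4 h3
    calc PP / x L ^ (e + 1)
        = ∏ m : Fin (e + 1), (x m.succ - x m.castSucc) / x L := by
          rw [hPPdef, Finset.prod_div_distrib, Finset.prod_const]
          norm_num
      _ ≤ ∏ m : Fin (e + 1), (t L - t m.castSucc) :=
          Finset.prod_le_prod
            (fun m _ => div_nonneg (sub_nonneg.2 (hmono (Fin.castSucc_lt_succ (i := m))).le)
              (hxpos L).le)
            (fun m _ => hfac m)
  have hPPeq : (∏ m : Fin (e + 2 - 1), (x ⟨m.1 + 1, by have := m.2; omega⟩
      - x ⟨m.1, by have := m.2; omega⟩)) = PP := by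
    rw [hPPdef]
    refine Finset.prod_congr rfl fun m _ => ?_
    have e1 : (⟨m.1 + 1, by have := m.2; omega⟩ : Fin (e + 2)) = m.succ := Fin.ext (by simp)
    have e2 : (⟨m.1, by have := m.2; omega⟩ : Fin (e + 2)) = Fin.castSucc m := Fin.ext (by simp)
    rw [e1, e2]
  -- final assembly
  rw [hPPeq]
  have huL : 0 < |u L| := abs_pos.2 (hu L)
  have hΛpos : 0 < N ^ (-ε) * |u L| * x L ^ (A + 1 - ((e + 2 : ℕ) : ℝ)) * PP := by
    have hr1 := Real.rpow_pos_of_pos hN0 (-ε)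
    have hr2 := Real.rpow_pos_of_pos (hxpos L) (A + 1 - ((e + 2 : ℕ) : ℝ))
    positivity
  refine ⟨mul_pos (div_pos hlog2 hK) hΛpos, i0, (Finset.mem_Icc.1 hi0mem).1,
    (Finset.mem_Icc.1 hi0mem).2, ?_⟩
  -- positivity of S and B
  have hXpos : 0 < |u L| * x L ^ α := mul_pos huL (Real.rpow_pos_of_pos (hxpos L) α)
  have hSBpos : 0 < S * B := lt_of_lt_of_le hXpos h1
  have hSnn : 0 ≤ S := Finset.sum_nonneg fun i _ => abs_nonneg _
  have hSpos : 0 < S := by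
    rcases hSnn.lt_or_eq with h | h
    · exact h
    · rw [← h, zero_mul] at hSBpos
      exact absurd hSBpos (lt_irrefl 0)
  -- key chain
  have htL : Real.log 2 ≤ t L := Real.log_le_log (by norm_num) (h2le L)
  have hxLpow : (0:ℝ) < x L ^ (e + 1) := pow_pos (hxpos L) _
  have hDlow : Real.log 2 * PP / x L ^ (e + 1) ≤ D := by
    rw [hDdef]
    have h5 : Real.log 2 * PP / x L ^ (e + 1) = Real.log 2 * (PP / x L ^ (e + 1)) := by ring
    rw [h5]
    exact mul_le_mul htL hQLge (by positivity) (htpos L).le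
  have hDinv : D⁻¹ ≤ x L ^ (e + 1) / (Real.log 2 * PP) := by
    have hlowpos : 0 < Real.log 2 * PP / x L ^ (e + 1) := by positivity
    have h6 := one_div_le_one_div_of_le hlowpos hDlow
    rw [one_div, one_div_div] at h6
    exact h6
  have hrpowA : x L ^ (A + 1 - ((e + 2 : ℕ) : ℝ)) * x L ^ (e + 1) = x L ^ A := by
    rw [← Real.rpow_natCast (x L) (e + 1), ← Real.rpow_add (hxpos L)]
    congr 1
    push_cast
    ring
  have hxa : x L ^ A ≤ x L ^ α := by
    have hb1 : (1:ℝ) < x L := by linarith [h2le L]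
    exact (Real.rpow_le_rpow_left_iff hb1).2 hα.1
  have hNN : N ^ (-ε) * N ^ ε = 1 := by
    rw [← Real.rpow_add hN0]
    simp
  have hchain : Real.log 2 / K * (N ^ (-ε) * |u L| * x L ^ (A + 1 - ((e + 2 : ℕ) : ℝ)) * PP) * S
      ≤ |u L| * x L ^ α := by
    calc Real.log 2 / K * (N ^ (-ε) * |u L| * x L ^ (A + 1 - ((e + 2 : ℕ) : ℝ)) * PP) * S
        ≤ Real.log 2 / K * (N ^ (-ε) * |u L| * x L ^ (A + 1 - ((e + 2 : ℕ) : ℝ)) * PP)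
            * (D⁻¹ * (1 + Real.log N) ^ (e + 1)) := by
          exact mul_le_mul_of_nonneg_left h2 (by positivity)
      _ ≤ Real.log 2 / K * (N ^ (-ε) * |u L| * x L ^ (A + 1 - ((e + 2 : ℕ) : ℝ)) * PP)
            * (D⁻¹ * (K * N ^ ε)) := by
          exact mul_le_mul_of_nonneg_left
            (mul_le_mul_of_nonneg_left h3 (inv_pos.2 hD).le) (by positivity)
      _ = Real.log 2 * (|u L| * x L ^ (A + 1 - ((e + 2 : ℕ) : ℝ)) * PP) * D⁻¹
            * ((N ^ (-ε) * N ^ ε) * (K⁻¹ * K)) := by ring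
      _ = Real.log 2 * (|u L| * x L ^ (A + 1 - ((e + 2 : ℕ) : ℝ)) * PP) * D⁻¹ := by
          rw [hNN, inv_mul_cancel₀ hK.ne']
          ring
      _ ≤ Real.log 2 * (|u L| * x L ^ (A + 1 - ((e + 2 : ℕ) : ℝ)) * PP)
            * (x L ^ (e + 1) / (Real.log 2 * PP)) := by
          refine mul_le_mul_of_nonneg_left hDinv ?_
          exact (mul_pos hlog2 (mul_pos (mul_pos huL
            (Real.rpow_pos_of_pos (hxpos L) _)) hPPpos)).le
      _ = |u L| * (x L ^ (A + 1 - ((e + 2 : ℕ) : ℝ)) * x L ^ (e + 1)) := by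
          field_simp
      _ = |u L| * x L ^ A := by rw [hrpowA]
      _ ≤ |u L| * x L ^ α := mul_le_mul_of_nonneg_left hxa (abs_nonneg _)
  have hfin := le_trans hchain h1
  have hfinal := le_of_mul_le_mul_right (by linarith : Real.log 2 / K
      * (N ^ (-ε) * |u L| * x L ^ (A + 1 - ((e + 2 : ℕ) : ℝ)) * PP) * S ≤ B * S) hSpos
  exact le_trans hfinal (le_of_eq hB)
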